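/- For each s ∈ {1,…,n} and each i ∈ {0,…,s−1}, one has P_s^*(α) = P_s(i,α) for every α ∈ R_s^i. -/

import Mathlib

open scoped Classical

/-- `h_s(y; z_{1:s})` (0-indexed: coordinates `0,…,s−1` of `y`,`z`,`l`,`u` play the role of
the paper's coordinates `1,…,s`): the objective of the fused ℓ₀ proximal subproblem
`(1/2)Σ_{j<s}(y_j−z_j)² + λ₁ Σ_{j<s−1}|y_j−y_{j+1}|₀ + Σ_{j<s} ω_j(y_j)`,
with value `⊤` outside the box constraints. -/
noncomputable def hfun (lam1 lam2 : ℝ) (l u z : ℕ → ℝ) (s : ℕ) (y : ℕ → ℝ) : EReal :=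
  if ∀ j ∈ Finset.range s, l j ≤ y j ∧ y j ≤ u j then
    ((((1 : ℝ) / 2) * ∑ j ∈ Finset.range s, (y j - z j) ^ 2
      + lam1 * ∑ j ∈ Finset.range (s - 1), (if y j = y (j + 1) then (0 : ℝ) else 1)
      + lam2 * ∑ j ∈ Finset.range s, (if y j = 0 then (0 : ℝ) else 1) : ℝ) : EReal)
  else ⊤

/-- `H(0) = −λ₁` and, for `s ≥ 1`, `H(s) = min_{y ∈ ℝˢ} h_s(y; z_{1:s})`
(the minimum is attained; it equals the infimum). -/
noncomputable def Hfun (lam1 lam2 : ℝ) (l u z : ℕ → ℝ) : ℕ → EReal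
  | 0 => ((-lam1 : ℝ) : EReal)
  | s + 1 => ⨅ y : ℕ → ℝ, hfun lam1 lam2 l u z (s + 1) y

/-- `P_s(i,α) = H(i) + (1/2)Σ_{j=i+1}^{s}(α−z_j)² + Σ_{j=i+1}^{s} ω_j(α) + λ₁`
(0-indexed: the sums run over `j ∈ [i, s)`). -/
noncomputable def Pfun (lam1 lam2 : ℝ) (l u z : ℕ → ℝ) (s i : ℕ) (α : ℝ) : EReal :=
  Hfun lam1 lam2 l u z i +
    (if ∀ j ∈ Finset.Ico i s, l j ≤ α ∧ α ≤ u j then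
      ((((1 : ℝ) / 2) * ∑ j ∈ Finset.Ico i s, (α - z j) ^ 2
        + lam2 * ((s - i : ℕ) : ℝ) * (if α = 0 then (0 : ℝ) else 1) + lam1 : ℝ) : EReal)
    else ⊤)

/-- `P_s^*(α) = min_{i ∈ {0,…,s−1}} P_s(i,α)`. -/
noncomputable def Pstar (lam1 lam2 : ℝ) (l u z : ℕ → ℝ) (s : ℕ) (α : ℝ) : EReal :=
  ⨅ i ∈ Finset.range s, Pfun lam1 lam2 l u z s i α
/-- The sets `R_s^i`: `R₁⁰ = ℝ`; for `s ≥ 2`,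
`R_s^{s−1} = {α : P_{s−1}^*(α) ≥ min_{α′} P_{s−1}^*(α′) + λ₁}` and
`R_s^i = R_{s−1}^i ∩ (R_s^{s−1})ᶜ` for `i ∈ {0,…,s−2}`.
(Values for the out-of-range indices `s = 0` and `s = 1, i ≥ 1` are junk.) -/
noncomputable def Rset (lam1 lam2 : ℝ) (l u z : ℕ → ℝ) : ℕ → ℕ → Set ℝ
  | 0, _ => ∅
  | 1, i => if i = 0 then Set.univ else ∅
  | s + 2, i =>
    if i = s + 1 then
      {α : ℝ | (⨅ α' : ℝ, Pstar lam1 lam2 l u z (s + 1) α') + ((lam1 : ℝ) : EReal)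
        ≤ Pstar lam1 lam2 l u z (s + 1) α}
    else
      Rset lam1 lam2 l u z (s + 1) i ∩
        {α : ℝ | (⨅ α' : ℝ, Pstar lam1 lam2 l u z (s + 1) α') + ((lam1 : ℝ) : EReal)
          ≤ Pstar lam1 lam2 l u z (s + 1) α}ᶜ
section Aux

private lemma ne_bot_of_nonneg' {x : EReal} (h : 0 ≤ x) : x ≠ ⊥ :=
  (lt_of_lt_of_le (by simp : (⊥:EReal) < 0) h).ne'

private lemma iInf1_add {ι : Sort*} (f : ι → EReal) (c : EReal)
    (hf : ∀ x, 0 ≤ f x) (hc : c ≠ ⊥) :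
    (⨅ x, (f x + c)) = (⨅ x, f x) + c := by
  have hb : (0:EReal) ≤ ⨅ x, f x := le_iInf hf
  induction c using EReal.rec with
  | bot => exact absurd rfl hc
  | top =>
    rw [EReal.add_top_of_ne_bot (ne_bot_of_nonneg' hb)]
    exact top_unique (le_iInf fun x => by
      rw [EReal.add_top_of_ne_bot (ne_bot_of_nonneg' (hf x))])
  | coe c =>
    refine le_antisymm ?_ (le_iInf fun x => add_le_add_left (iInf_le _ x) _)
    rw [← EReal.sub_le_iff_le_add (Or.inl (EReal.coe_ne_bot c)) (Or.inl (EReal.coe_ne_top c))]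
    refine le_iInf fun x => ?_
    rw [EReal.sub_le_iff_le_add (Or.inl (EReal.coe_ne_bot c)) (Or.inl (EReal.coe_ne_top c))]
    exact iInf_le _ x

private lemma iInf2_add {ι : Sort*} (p : ι → Prop) (f : ι → EReal) (c : EReal)
    (hf : ∀ x, 0 ≤ f x) (hc : c ≠ ⊥) :
    (⨅ x, ⨅ _ : p x, (f x + c)) = (⨅ x, ⨅ _ : p x, f x) + c := by
  have e : ∀ x, (⨅ _ : p x, (f x + c)) = (⨅ _ : p x, f x) + c := fun x =>
    iInf1_add (fun _ => f x) c (fun _ => hf x) hc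
  rw [iInf_congr e]
  exact iInf1_add _ c (fun x => le_iInf fun _ => hf x) hc

private lemma iInf3_add {ι : Sort*} (p q : ι → Prop) (f : ι → EReal) (c : EReal)
    (hf : ∀ x, 0 ≤ f x) (hc : c ≠ ⊥) :
    (⨅ x, ⨅ _ : p x, ⨅ _ : q x, (f x + c)) = (⨅ x, ⨅ _ : p x, ⨅ _ : q x, f x) + c := by
  have e : ∀ x, (⨅ _ : p x, ⨅ _ : q x, (f x + c)) = (⨅ _ : p x, ⨅ _ : q x, f x) + c := fun x =>
    iInf2_add (fun _ => q x) (fun _ => f x) c (fun _ => hf x) hc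
  rw [iInf_congr e]
  exact iInf1_add _ c (fun x => le_iInf fun _ => le_iInf fun _ => hf x) hc

private lemma iInf_part (f : (ℕ → ℝ) → EReal) (k : ℕ) :
    (⨅ y : ℕ → ℝ, f y) = ⨅ β : ℝ, ⨅ y : ℕ → ℝ, ⨅ _ : y k = β, f y := by
  refine le_antisymm (le_iInf fun β => le_iInf fun y => le_iInf fun _ => iInf_le _ y)
    (le_iInf fun y => ?_)
  exact iInf_le_of_le (y k) (iInf_le_of_le y (iInf_le _ rfl))

private lemma iInf_part' (f : (ℕ → ℝ) → EReal) (p : (ℕ → ℝ) → Prop) (k : ℕ) :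
    (⨅ y : ℕ → ℝ, ⨅ _ : p y, f y)
      = ⨅ β : ℝ, ⨅ y : ℕ → ℝ, ⨅ _ : p y, ⨅ _ : y k = β, f y := by
  refine le_antisymm
    (le_iInf fun β => le_iInf fun y => le_iInf fun hp => le_iInf fun _ =>
      iInf_le_of_le y (iInf_le _ hp))
    (le_iInf fun y => le_iInf fun hp => ?_)
  exact iInf_le_of_le (y k) (iInf_le_of_le y (le_trans (iInf_le _ hp) (iInf_le _ rfl)))

private lemma iInf_dropc (f : (ℕ → ℝ) → EReal) (k m : ℕ) (hkm : k ≠ m) (α β : ℝ)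
    (hf : ∀ y t, f (Function.update y m t) = f y) :
    (⨅ y : ℕ → ℝ, ⨅ _ : y m = α, ⨅ _ : y k = β, f y)
      = ⨅ y : ℕ → ℝ, ⨅ _ : y k = β, f y := by
  refine le_antisymm (le_iInf fun y => le_iInf fun hk => ?_)
    (le_iInf fun y => le_iInf fun _ => le_iInf fun hk => iInf_le_of_le y (iInf_le _ hk))
  refine iInf_le_of_le (Function.update y m α) ?_
  rw [iInf_pos (Function.update_self m α y),
    iInf_pos (by rw [Function.update_of_ne hkm]; exact hk), hf]

private lemma min_add_dist (a b c : EReal) : (a ⊓ b) + c = (a + c) ⊓ (b + c) := by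
  rcases le_total a b with h | h
  · rw [inf_eq_left.mpr h, inf_eq_left.mpr (add_le_add_left h c)]
  · rw [inf_eq_right.mpr h, inf_eq_right.mpr (add_le_add_left h c)]

private lemma forall_Ico_succ {P : ℕ → Prop} {i s : ℕ} (his : i ≤ s) :
    (∀ j ∈ Finset.Ico i (s+1), P j) ↔ (∀ j ∈ Finset.Ico i s, P j) ∧ P s := by
  simp only [Finset.mem_Ico]
  constructor
  · exact fun h => ⟨fun j hj => h j ⟨hj.1, by omega⟩, h s ⟨his, by omega⟩⟩
  · rintro ⟨ha, hb⟩ j ⟨hj1, hj2⟩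
    rcases Nat.lt_or_ge j s with h | h
    · exact ha j ⟨hj1, h⟩
    · have : j = s := by omega
      subst this; exact hb

end Aux
section Dom

variable (lam1 lam2 : ℝ) (l u z : ℕ → ℝ)

/-- marginal cost of extending a constant segment by coordinate `s`. -/
private noncomputable def Cfun (s : ℕ) (α : ℝ) : EReal :=
  if l s ≤ α ∧ α ≤ u s then
    ((((1:ℝ)/2) * (α - z s)^2 + lam2 * (if α = 0 then (0:ℝ) else 1) : ℝ) : EReal)
  else ⊤

private lemma Cfun_ne_bot (s : ℕ) (α : ℝ) : Cfun lam2 l u z s α ≠ ⊥ := by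
  rw [Cfun]; split
  · exact EReal.coe_ne_bot _
  · simp

private lemma hfun_nonneg (h1 : 0 ≤ lam1) (h2 : 0 ≤ lam2) (s : ℕ) (y : ℕ → ℝ) :
    (0:EReal) ≤ hfun lam1 lam2 l u z s y := by
  rw [hfun]; split
  · apply EReal.coe_nonneg.mpr
    have t1 : (0:ℝ) ≤ ∑ j ∈ Finset.range s, (y j - z j)^2 :=
      Finset.sum_nonneg fun j _ => sq_nonneg _
    have t2 : (0:ℝ) ≤ ∑ j ∈ Finset.range (s-1), (if y j = y (j+1) then (0:ℝ) else 1) :=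
      Finset.sum_nonneg fun j _ => by split <;> norm_num
    have t3 : (0:ℝ) ≤ ∑ j ∈ Finset.range s, (if y j = 0 then (0:ℝ) else 1) :=
      Finset.sum_nonneg fun j _ => by split <;> norm_num
    have := mul_nonneg h1 t2
    have := mul_nonneg h2 t3
    nlinarith
  · exact le_top

private lemma Hfun_lb (h1 : 0 ≤ lam1) (h2 : 0 ≤ lam2) (s : ℕ) :
    ((-lam1 : ℝ) : EReal) ≤ Hfun lam1 lam2 l u z s := by
  cases s with
  | zero => exact le_refl _
  | succ k =>
    refine le_trans ?_ (le_iInf fun y => hfun_nonneg lam1 lam2 l u z h1 h2 (k+1) y)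
    exact_mod_cast (by linarith : (-lam1 : ℝ) ≤ 0)

private lemma Pfun_nonneg (h1 : 0 ≤ lam1) (h2 : 0 ≤ lam2) (s i : ℕ) (α : ℝ) :
    (0:EReal) ≤ Pfun lam1 lam2 l u z s i α := by
  rw [Pfun]
  have hX : ((lam1:ℝ):EReal) ≤ (if ∀ j ∈ Finset.Ico i s, l j ≤ α ∧ α ≤ u j then
      ((((1 : ℝ) / 2) * ∑ j ∈ Finset.Ico i s, (α - z j) ^ 2
        + lam2 * ((s - i : ℕ) : ℝ) * (if α = 0 then (0 : ℝ) else 1) + lam1 : ℝ) : EReal)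
    else ⊤) := by
    split
    · apply EReal.coe_le_coe_iff.mpr
      have t1 : (0:ℝ) ≤ ∑ j ∈ Finset.Ico i s, (α - z j)^2 :=
        Finset.sum_nonneg fun j _ => sq_nonneg _
      have t2 : (0:ℝ) ≤ ((s - i : ℕ) : ℝ) := Nat.cast_nonneg _
      have t3 : (0:ℝ) ≤ (if α = 0 then (0:ℝ) else 1) := by split <;> norm_num
      have t4 := mul_nonneg (mul_nonneg h2 t2) t3
      linarith
    · exact le_top
  calc (0:EReal) = ((-lam1 + lam1 : ℝ) : EReal) := by norm_num
  _ = ((-lam1:ℝ):EReal) + ((lam1:ℝ):EReal) := EReal.coe_add _ _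
  _ ≤ _ := add_le_add (Hfun_lb lam1 lam2 l u z h1 h2 i) hX

private lemma Pstar_nonneg (h1 : 0 ≤ lam1) (h2 : 0 ≤ lam2) (s : ℕ) (α : ℝ) :
    (0:EReal) ≤ Pstar lam1 lam2 l u z s α :=
  le_iInf fun i => le_iInf fun _ => Pfun_nonneg lam1 lam2 l u z h1 h2 s i α

private lemma Pfun_succ {i s : ℕ} (his : i ≤ s) (α : ℝ) :
    Pfun lam1 lam2 l u z (s+1) i α
      = Pfun lam1 lam2 l u z s i α + Cfun lam2 l u z s α := by
  have hX : (if ∀ j ∈ Finset.Ico i (s+1), l j ≤ α ∧ α ≤ u j then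
      ((((1 : ℝ) / 2) * ∑ j ∈ Finset.Ico i (s+1), (α - z j) ^ 2
        + lam2 * ((s + 1 - i : ℕ) : ℝ) * (if α = 0 then (0 : ℝ) else 1) + lam1 : ℝ) : EReal)
    else ⊤)
      = (if ∀ j ∈ Finset.Ico i s, l j ≤ α ∧ α ≤ u j then
      ((((1 : ℝ) / 2) * ∑ j ∈ Finset.Ico i s, (α - z j) ^ 2
        + lam2 * ((s - i : ℕ) : ℝ) * (if α = 0 then (0 : ℝ) else 1) + lam1 : ℝ) : EReal)
    else ⊤) + Cfun lam2 l u z s α := by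
    rw [Cfun]
    by_cases hA : ∀ j ∈ Finset.Ico i s, l j ≤ α ∧ α ≤ u j
    · by_cases hB : l s ≤ α ∧ α ≤ u s
      · rw [if_pos ((forall_Ico_succ his).mpr ⟨hA, hB⟩), if_pos hA, if_pos hB, ← EReal.coe_add]
        apply congrArg
        rw [Finset.sum_Ico_succ_top his]
        have e : s + 1 - i = (s - i) + 1 := by omega
        rw [e]
        push_cast
        ring
      · rw [if_neg (fun h => hB ((forall_Ico_succ his).mp h).2), if_pos hA, if_neg hB,
          EReal.add_top_of_ne_bot (EReal.coe_ne_bot _)]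
    · have hC : (if l s ≤ α ∧ α ≤ u s then
          ((((1:ℝ)/2) * (α - z s)^2 + lam2 * (if α = 0 then (0:ℝ) else 1) : ℝ) : EReal)
        else ⊤) ≠ ⊥ := by
        split
        · exact EReal.coe_ne_bot _
        · simp
      rw [if_neg (fun h => hA ((forall_Ico_succ his).mp h).1), if_neg hA,
        EReal.top_add_of_ne_bot hC]
  rw [Pfun, Pfun, hX]
  exact (add_assoc _ _ _).symm

private lemma Pfun_top_succ (s : ℕ) (α : ℝ) :
    Pfun lam1 lam2 l u z (s+1) s α
      = Hfun lam1 lam2 l u z s + (((lam1:ℝ):EReal) + Cfun lam2 l u z s α) := by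
  have hIco : Finset.Ico s (s+1) = {s} := Nat.Ico_succ_singleton s
  have hX : (if ∀ j ∈ Finset.Ico s (s+1), l j ≤ α ∧ α ≤ u j then
      ((((1 : ℝ) / 2) * ∑ j ∈ Finset.Ico s (s+1), (α - z j) ^ 2
        + lam2 * ((s + 1 - s : ℕ) : ℝ) * (if α = 0 then (0 : ℝ) else 1) + lam1 : ℝ) : EReal)
    else ⊤) = ((lam1:ℝ):EReal) + Cfun lam2 l u z s α := by
    rw [Cfun]
    by_cases hB : l s ≤ α ∧ α ≤ u s
    · rw [if_pos (by intro j hj; rw [hIco, Finset.mem_singleton] at hj; subst hj; exact hB),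
        if_pos hB, ← EReal.coe_add]
      apply congrArg
      rw [hIco, Finset.sum_singleton]
      have e : s + 1 - s = 1 := by omega
      rw [e]
      push_cast
      ring
    · rw [if_neg (fun h => hB (h s (by rw [hIco]; exact Finset.mem_singleton_self s))),
        if_neg hB, EReal.add_top_of_ne_bot (EReal.coe_ne_bot _)]
  rw [Pfun, hX]

end Dom
section Dom2

variable (lam1 lam2 : ℝ) (l u z : ℕ → ℝ)

private lemma hfun_succ (k : ℕ) (y : ℕ → ℝ) :
    hfun lam1 lam2 l u z (k+2) y = hfun lam1 lam2 l u z (k+1) y +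
      (if l (k+1) ≤ y (k+1) ∧ y (k+1) ≤ u (k+1) then
        ((((1:ℝ)/2) * (y (k+1) - z (k+1))^2 + lam1 * (if y k = y (k+1) then (0:ℝ) else 1)
          + lam2 * (if y (k+1) = 0 then (0:ℝ) else 1) : ℝ) : EReal) else ⊤) := by
  rw [hfun, hfun]
  have e1 : k + 2 - 1 = k + 1 := rfl
  have e2 : k + 1 - 1 = k := rfl
  rw [e1, e2]
  have hcond : (∀ j ∈ Finset.range (k+2), l j ≤ y j ∧ y j ≤ u j) ↔
      ((∀ j ∈ Finset.range (k+1), l j ≤ y j ∧ y j ≤ u j)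
        ∧ (l (k+1) ≤ y (k+1) ∧ y (k+1) ≤ u (k+1))) := by
    rw [Finset.range_add_one, Finset.forall_mem_insert]
    exact and_comm
  by_cases hA : ∀ j ∈ Finset.range (k+1), l j ≤ y j ∧ y j ≤ u j
  · by_cases hB : l (k+1) ≤ y (k+1) ∧ y (k+1) ≤ u (k+1)
    · rw [if_pos (hcond.mpr ⟨hA, hB⟩), if_pos hA, if_pos hB, ← EReal.coe_add]
      apply congrArg
      rw [Finset.sum_range_succ (fun j => (y j - z j)^2) (k+1),
          Finset.sum_range_succ (fun j => if y j = y (j+1) then (0:ℝ) else 1) k,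
          Finset.sum_range_succ (fun j => if y j = 0 then (0:ℝ) else 1) (k+1)]
      ring
    · rw [if_neg (fun h => hB (hcond.mp h).2), if_pos hA, if_neg hB,
        EReal.add_top_of_ne_bot (EReal.coe_ne_bot _)]
  · have hJ : (if l (k+1) ≤ y (k+1) ∧ y (k+1) ≤ u (k+1) then
        ((((1:ℝ)/2) * (y (k+1) - z (k+1))^2 + lam1 * (if y k = y (k+1) then (0:ℝ) else 1)
          + lam2 * (if y (k+1) = 0 then (0:ℝ) else 1) : ℝ) : EReal) else ⊤) ≠ ⊥ := by
      split
      · exact EReal.coe_ne_bot _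
      · simp
    rw [if_neg (fun h => hA (hcond.mp h).1), if_neg hA, EReal.top_add_of_ne_bot hJ]

private lemma hfun_indep (s m : ℕ) (hm : s ≤ m) (y : ℕ → ℝ) (t : ℝ) :
    hfun lam1 lam2 l u z s (Function.update y m t) = hfun lam1 lam2 l u z s y := by
  rw [hfun, hfun]
  have hupd : ∀ j, j < s → Function.update y m t j = y j := fun j hj =>
    Function.update_of_ne (by omega) t y
  have c1 : (∀ j ∈ Finset.range s,
        l j ≤ Function.update y m t j ∧ Function.update y m t j ≤ u j)
      ↔ (∀ j ∈ Finset.range s, l j ≤ y j ∧ y j ≤ u j) := by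
    constructor <;> intro h j hj
    · have := h j hj; rwa [hupd j (Finset.mem_range.mp hj)] at this
    · rw [hupd j (Finset.mem_range.mp hj)]; exact h j hj
  have s1 : ∑ j ∈ Finset.range s, (Function.update y m t j - z j)^2
      = ∑ j ∈ Finset.range s, (y j - z j)^2 :=
    Finset.sum_congr rfl fun j hj => by rw [hupd j (Finset.mem_range.mp hj)]
  have s2 : ∑ j ∈ Finset.range (s-1),
        (if Function.update y m t j = Function.update y m t (j+1) then (0:ℝ) else 1)
      = ∑ j ∈ Finset.range (s-1), (if y j = y (j+1) then (0:ℝ) else 1) :=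
    Finset.sum_congr rfl fun j hj => by
      have hj' := Finset.mem_range.mp hj
      rw [hupd j (by omega), hupd (j+1) (by omega)]
  have s3 : ∑ j ∈ Finset.range s, (if Function.update y m t j = 0 then (0:ℝ) else 1)
      = ∑ j ∈ Finset.range s, (if y j = 0 then (0:ℝ) else 1) :=
    Finset.sum_congr rfl fun j hj => by rw [hupd j (Finset.mem_range.mp hj)]
  rw [s1, s2, s3]
  exact if_congr c1 rfl rfl

private lemma Pstar_one (α : ℝ) :
    Pstar lam1 lam2 l u z 1 α = Pfun lam1 lam2 l u z 1 0 α := by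
  rw [Pstar]
  refine le_antisymm (iInf_le_of_le 0 (iInf_le _ (by simp))) (le_iInf fun i => le_iInf fun hi => ?_)
  have hi0 : i = 0 := by simpa using hi
  subst hi0
  exact le_refl _

private lemma Pstar_succ (h1 : 0 ≤ lam1) (h2 : 0 ≤ lam2) (s : ℕ) (α : ℝ) :
    Pstar lam1 lam2 l u z (s+1) α
      = (Pstar lam1 lam2 l u z s α ⊓ (Hfun lam1 lam2 l u z s + ((lam1:ℝ):EReal)))
          + Cfun lam2 l u z s α := by
  rw [Pstar, Finset.range_add_one, Finset.iInf_insert]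
  have e2 : (⨅ i ∈ Finset.range s, Pfun lam1 lam2 l u z (s+1) i α)
      = Pstar lam1 lam2 l u z s α + Cfun lam2 l u z s α := by
    have e : (⨅ i ∈ Finset.range s, Pfun lam1 lam2 l u z (s+1) i α)
        = ⨅ i, ⨅ _ : i ∈ Finset.range s,
            (Pfun lam1 lam2 l u z s i α + Cfun lam2 l u z s α) :=
      iInf_congr fun i => iInf_congr fun hi =>
        Pfun_succ lam1 lam2 l u z (Finset.mem_range.mp hi).le α
    rw [e, iInf2_add _ _ _ (fun i => Pfun_nonneg lam1 lam2 l u z h1 h2 s i α)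
      (Cfun_ne_bot lam2 l u z s α)]
    rfl
  rw [e2, Pfun_top_succ lam1 lam2 l u z s α, min_add_dist, add_assoc]
  exact inf_comm _ _

end Dom2
section Dom3

variable (lam1 lam2 : ℝ) (l u z : ℕ → ℝ)

private lemma masterD (h1 : 0 ≤ lam1) (h2 : 0 ≤ lam2) : ∀ (k : ℕ) (α : ℝ),
    (⨅ y : ℕ → ℝ, ⨅ _ : y k = α, hfun lam1 lam2 l u z (k+1) y)
      = Pstar lam1 lam2 l u z (k+1) α := by
  intro k
  induction k with
  | zero =>
    intro α
    have key : ∀ y : ℕ → ℝ, y 0 = α →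
        hfun lam1 lam2 l u z 1 y = Pfun lam1 lam2 l u z 1 0 α := by
      intro y hy
      subst hy
      rw [hfun, Pfun]
      have hH0 : Hfun lam1 lam2 l u z 0 = ((-lam1:ℝ):EReal) := rfl
      rw [hH0]
      simp only [show (1:ℕ)-1 = 0 from rfl, show (1:ℕ)-0 = 1 from rfl,
        ← Finset.range_eq_Ico, Finset.range_one, Finset.mem_singleton, forall_eq,
        Finset.sum_singleton, Finset.sum_range_zero]
      split_ifs with h <;>
        first
          | (rw [← EReal.coe_add]; apply congrArg; push_cast; ring)
          | rw [EReal.add_top_of_ne_bot (EReal.coe_ne_bot _)]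
    refine le_antisymm ?_ (le_iInf fun y => le_iInf fun hy => by rw [Pstar_one, ← key y hy])
    refine iInf_le_of_le (fun _ => α) ?_
    rw [iInf_pos rfl, key (fun _ => α) rfl, Pstar_one]
  | succ k IH =>
    intro α
    show (⨅ y : ℕ → ℝ, ⨅ _ : y (k+1) = α, hfun lam1 lam2 l u z (k+2) y)
      = Pstar lam1 lam2 l u z (k+2) α
    have hH : Hfun lam1 lam2 l u z (k+1) = ⨅ β : ℝ, Pstar lam1 lam2 l u z (k+1) β := by
      show (⨅ y : ℕ → ℝ, hfun lam1 lam2 l u z (k+1) y) = _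
      rw [iInf_part (fun y => hfun lam1 lam2 l u z (k+1) y) k]
      exact iInf_congr fun β => IH β
    have e1 : (⨅ y : ℕ → ℝ, ⨅ _ : y (k+1) = α, hfun lam1 lam2 l u z (k+2) y)
        = ⨅ y : ℕ → ℝ, ⨅ _ : y (k+1) = α, (hfun lam1 lam2 l u z (k+1) y +
            (if l (k+1) ≤ y (k+1) ∧ y (k+1) ≤ u (k+1) then
              ((((1:ℝ)/2) * (y (k+1) - z (k+1))^2
                + lam1 * (if y k = y (k+1) then (0:ℝ) else 1)
                + lam2 * (if y (k+1) = 0 then (0:ℝ) else 1) : ℝ) : EReal) else ⊤)) :=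
      iInf_congr fun y => iInf_congr fun _ => hfun_succ lam1 lam2 l u z k y
    have e3 : ∀ β : ℝ,
        (⨅ y : ℕ → ℝ, ⨅ _ : y (k+1) = α, ⨅ _ : y k = β,
          (hfun lam1 lam2 l u z (k+1) y +
            (if l (k+1) ≤ y (k+1) ∧ y (k+1) ≤ u (k+1) then
              ((((1:ℝ)/2) * (y (k+1) - z (k+1))^2
                + lam1 * (if y k = y (k+1) then (0:ℝ) else 1)
                + lam2 * (if y (k+1) = 0 then (0:ℝ) else 1) : ℝ) : EReal) else ⊤)))
        = Pstar lam1 lam2 l u z (k+1) β +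
            (((lam1 * (if β = α then (0:ℝ) else 1) : ℝ) : EReal)
              + Cfun lam2 l u z (k+1) α) := by
      intro β
      have hKne : ((lam1 * (if β = α then (0:ℝ) else 1) : ℝ) : EReal)
          + Cfun lam2 l u z (k+1) α ≠ ⊥ := by
        intro h
        rcases EReal.add_eq_bot_iff.mp h with h | h
        · exact EReal.coe_ne_bot _ h
        · exact Cfun_ne_bot lam2 l u z (k+1) α h
      have ecg : ∀ y : ℕ → ℝ, y (k+1) = α → y k = β →
          (hfun lam1 lam2 l u z (k+1) y +
            (if l (k+1) ≤ y (k+1) ∧ y (k+1) ≤ u (k+1) then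
              ((((1:ℝ)/2) * (y (k+1) - z (k+1))^2
                + lam1 * (if y k = y (k+1) then (0:ℝ) else 1)
                + lam2 * (if y (k+1) = 0 then (0:ℝ) else 1) : ℝ) : EReal) else ⊤))
          = hfun lam1 lam2 l u z (k+1) y +
              (((lam1 * (if β = α then (0:ℝ) else 1) : ℝ) : EReal)
                + Cfun lam2 l u z (k+1) α) := by
        intro y hy1 hy2
        rw [hy1, hy2]
        congr 1
        rw [Cfun]
        split_ifs with hB <;>
          first
            | (rw [← EReal.coe_add]; apply congrArg; ring)
            | rw [EReal.add_top_of_ne_bot (EReal.coe_ne_bot _)]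
      rw [iInf_congr fun y => iInf_congr fun hy1 => iInf_congr fun hy2 => ecg y hy1 hy2,
        iInf3_add _ _ _ _ (fun y => hfun_nonneg lam1 lam2 l u z h1 h2 (k+1) y) hKne,
        iInf_dropc _ k (k+1) (by omega) α β
          (fun y t => hfun_indep lam1 lam2 l u z (k+1) (k+1) le_rfl y t),
        IH β]
    have e5 : (⨅ β : ℝ, (Pstar lam1 lam2 l u z (k+1) β
          + ((lam1 * (if β = α then (0:ℝ) else 1) : ℝ) : EReal)))
        = Pstar lam1 lam2 l u z (k+1) α
            ⊓ ((⨅ β : ℝ, Pstar lam1 lam2 l u z (k+1) β) + ((lam1:ℝ):EReal)) := by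
      refine le_antisymm (le_inf ?_ ?_) (le_iInf fun β => ?_)
      · refine le_trans (iInf_le _ α) ?_
        rw [if_pos rfl, mul_zero, EReal.coe_zero, add_zero]
      · rw [← iInf1_add _ _ (fun β => Pstar_nonneg lam1 lam2 l u z h1 h2 (k+1) β)
          (EReal.coe_ne_bot lam1)]
        refine le_iInf fun β => le_trans (iInf_le _ β) (add_le_add_right ?_ _)
        apply EReal.coe_le_coe_iff.mpr
        split
        · simpa using h1
        · exact le_of_eq (mul_one _)
      · by_cases hβ : β = α
        · subst hβ
          rw [if_pos rfl, mul_zero, EReal.coe_zero, add_zero]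
          exact inf_le_left
        · rw [if_neg hβ, mul_one]
          exact inf_le_right.trans (add_le_add_left (iInf_le _ β) _)
    rw [e1, iInf_part' _ _ k, iInf_congr e3,
      iInf_congr fun β : ℝ => (add_assoc (Pstar lam1 lam2 l u z (k+1) β)
        ((lam1 * (if β = α then (0:ℝ) else 1) : ℝ) : EReal)
        (Cfun lam2 l u z (k+1) α)).symm,
      iInf1_add _ _ (fun β : ℝ => add_nonneg (Pstar_nonneg lam1 lam2 l u z h1 h2 (k+1) β)
        (EReal.coe_nonneg.mpr (mul_nonneg h1 (by split <;> norm_num))))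
        (Cfun_ne_bot lam2 l u z (k+1) α),
      e5, ← hH, ← Pstar_succ lam1 lam2 l u z h1 h2 (k+1) α]

private lemma HeqInf (h1 : 0 ≤ lam1) (h2 : 0 ≤ lam2) (k : ℕ) :
    Hfun lam1 lam2 l u z (k+1) = ⨅ β : ℝ, Pstar lam1 lam2 l u z (k+1) β := by
  show (⨅ y : ℕ → ℝ, hfun lam1 lam2 l u z (k+1) y) = _
  rw [iInf_part (fun y => hfun lam1 lam2 l u z (k+1) y) k]
  exact iInf_congr fun β => masterD lam1 lam2 l u z h1 h2 k β

end Dom3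
private lemma main_aux (lam1 lam2 : ℝ) (l u z : ℕ → ℝ) (h1 : 0 ≤ lam1) (h2 : 0 ≤ lam2) :
    ∀ s : ℕ, ∀ i < s + 1, ∀ α ∈ Rset lam1 lam2 l u z (s+1) i,
      Pstar lam1 lam2 l u z (s+1) α = Pfun lam1 lam2 l u z (s+1) i α := by
  intro s
  induction s with
  | zero =>
    intro i hi α _
    have hi0 : i = 0 := by omega
    subst hi0
    exact Pstar_one lam1 lam2 l u z α
  | succ k IH =>
    intro i hi α hα
    have hR : Rset lam1 lam2 l u z (k+1+1) i = (if i = k+1 then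
        {α : ℝ | (⨅ α' : ℝ, Pstar lam1 lam2 l u z (k + 1) α') + ((lam1 : ℝ) : EReal)
          ≤ Pstar lam1 lam2 l u z (k + 1) α}
      else Rset lam1 lam2 l u z (k + 1) i ∩
        {α : ℝ | (⨅ α' : ℝ, Pstar lam1 lam2 l u z (k + 1) α') + ((lam1 : ℝ) : EReal)
          ≤ Pstar lam1 lam2 l u z (k + 1) α}ᶜ) := rfl
    rw [hR] at hα
    by_cases hik : i = k+1
    · subst hik
      rw [if_pos rfl] at hα
      have hα' : (⨅ α' : ℝ, Pstar lam1 lam2 l u z (k+1) α') + ((lam1:ℝ):EReal)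
          ≤ Pstar lam1 lam2 l u z (k+1) α := hα
      rw [Pstar_succ lam1 lam2 l u z h1 h2 (k+1) α, Pfun_top_succ lam1 lam2 l u z (k+1) α]
      have hmin : Pstar lam1 lam2 l u z (k+1) α
            ⊓ (Hfun lam1 lam2 l u z (k+1) + ((lam1:ℝ):EReal))
          = Hfun lam1 lam2 l u z (k+1) + ((lam1:ℝ):EReal) :=
        inf_eq_right.mpr (by rw [HeqInf lam1 lam2 l u z h1 h2 k]; exact hα')
      rw [hmin, add_assoc]
    · rw [if_neg hik] at hα
      obtain ⟨hα1, hα2⟩ := hα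
      have hα2' : ¬ ((⨅ α' : ℝ, Pstar lam1 lam2 l u z (k+1) α') + ((lam1:ℝ):EReal)
          ≤ Pstar lam1 lam2 l u z (k+1) α) := hα2
      have hlt := not_le.mp hα2'
      have hi' : i < k + 1 := by omega
      rw [Pstar_succ lam1 lam2 l u z h1 h2 (k+1) α,
        Pfun_succ lam1 lam2 l u z (show i ≤ k+1 by omega) α]
      have hmin : Pstar lam1 lam2 l u z (k+1) α
            ⊓ (Hfun lam1 lam2 l u z (k+1) + ((lam1:ℝ):EReal))
          = Pstar lam1 lam2 l u z (k+1) α :=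
        inf_eq_left.mpr (by rw [HeqInf lam1 lam2 l u z h1 h2 k]; exact hlt.le)
      rw [hmin, IH i hi' α hα1]
/-- for each `s ∈ {1,…,n}` and `i ∈ {0,…,s−1}`,
`P_s^*(α) = P_s(i,α)` for every `α ∈ R_s^i`. -/
theorem stmt7 (n : ℕ) (hn : 1 ≤ n) (lam1 lam2 : ℝ) (hlam1 : 0 < lam1) (hlam2 : 0 < lam2)
    (l u z : ℕ → ℝ) (hlu : ∀ i < n, l i ≤ 0 ∧ 0 ≤ u i)
    (s : ℕ) (hs1 : 1 ≤ s) (hsn : s ≤ n) (i : ℕ) (hi : i < s)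
    (α : ℝ) (hα : α ∈ Rset lam1 lam2 l u z s i) :
    Pstar lam1 lam2 l u z s α = Pfun lam1 lam2 l u z s i α := by
  obtain ⟨s', rfl⟩ : ∃ s', s = s' + 1 := ⟨s - 1, by omega⟩
  exact main_aux lam1 lam2 l u z hlam1.le hlam2.le s' i hi α hα
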